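/- Let x, a, b₁, b₂ be positive real numbers and write |b|² = b₁² + b₂². Then the double limit as M → ∞ and N → ∞ of (1/(4MN)) · log ∏_{j=1}^{M} ∏_{k=1}^{N} ( x² + 4a² cos²(jπ/(2M+1)) + 4|b|² cos²(kπ/(2N+1)) )² exists and equals (2/π²) · ∫₀^{π/2} ∫₀^{π/2} log( x² + 4a² cos²θ + 4|b|² cos²φ ) dθ dφ. -/

import Mathlib

open Filter Real Finset

lemma cont_param (F : ℝ → ℝ → ℝ) (hF : Continuous fun p : ℝ × ℝ => F p.1 p.2) (α β : ℝ) :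
    Continuous fun θ => ∫ φ in α..β, F θ φ := by
  rw [continuous_iff_continuousAt]
  intro θ₀
  obtain ⟨C, hC⟩ := ((isCompact_Icc (a := θ₀ - 1) (b := θ₀ + 1)).prod
    (isCompact_uIcc (a := α) (b := β))).exists_bound_of_continuousOn hF.continuousOn
  apply intervalIntegral.continuousAt_of_dominated_interval
    (bound := fun _ => C) (F := fun θ φ => F θ φ)
  · exact Eventually.of_forall fun θ =>
      ((hF.comp (Continuous.prodMk_right θ)).aestronglyMeasurable)
  · filter_upwards [Icc_mem_nhds (by linarith : θ₀ - 1 < θ₀) (by linarith : θ₀ < θ₀ + 1)]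
      with θ hθ
    refine MeasureTheory.ae_of_all _ fun φ hφ => ?_
    exact hC (θ, φ) ⟨hθ, Set.uIoc_subset_uIcc hφ⟩
  · exact intervalIntegrable_const
  · refine MeasureTheory.ae_of_all _ fun φ _ => ?_
    exact (hF.comp (continuous_id.prodMk continuous_const)).continuousAt

set_option maxHeartbeats 1000000 in
lemma key_est (F : ℝ → ℝ → ℝ) (hF : Continuous fun p : ℝ × ℝ => F p.1 p.2)
    {ε δ : ℝ} (hε : 0 ≤ ε) (hδ : 0 < δ)
    (hmod : ∀ p ∈ Set.Icc (0:ℝ) (π/2) ×ˢ Set.Icc (0:ℝ) (π/2),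
      ∀ q ∈ Set.Icc (0:ℝ) (π/2) ×ˢ Set.Icc (0:ℝ) (π/2),
      dist p q < δ → |F p.1 p.2 - F q.1 q.2| ≤ ε)
    {M N : ℕ} (hM : 1 ≤ M) (hN : 1 ≤ N)
    (hhM : π/(2*M) < δ) (hhN : π/(2*N) < δ) :
    |(π/(2*M)) * (π/(2*N)) *
        (∑ j ∈ Finset.range M, ∑ k ∈ Finset.range N,
          F (((j:ℝ)+1)*π/(2*M+1)) (((k:ℝ)+1)*π/(2*N+1)))
      - ∫ θ in (0:ℝ)..(π/2), ∫ φ in (0:ℝ)..(π/2), F θ φ| ≤ (π/2)^2 * ε := by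
  have hπ := Real.pi_pos
  have hM0 : (0:ℝ) < M := by exact_mod_cast hM
  have hN0 : (0:ℝ) < N := by exact_mod_cast hN
  set h : ℝ := π/(2*M) with hh_def
  set h' : ℝ := π/(2*N) with hh'_def
  have hhpos : 0 < h := by positivity
  have hh'pos : 0 < h' := by positivity
  set u : ℕ → ℝ := fun i => i * h with hu_def
  set v : ℕ → ℝ := fun i => i * h' with hv_def
  have hu_step : ∀ i : ℕ, u (i+1) - u i = h := by
    intro i; simp only [hu_def]; push_cast; ring
  have hv_step : ∀ i : ℕ, v (i+1) - v i = h' := by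
    intro i; simp only [hv_def]; push_cast; ring
  have hu_mono : ∀ i : ℕ, u i ≤ u (i+1) := fun i => by
    have := hu_step i; linarith
  have hv_mono : ∀ i : ℕ, v i ≤ v (i+1) := fun i => by
    have := hv_step i; linarith
  have huM : u M = π/2 := by
    simp only [hu_def, hh_def]; field_simp
  have hvN : v N = π/2 := by
    simp only [hv_def, hh'_def]; field_simp
  have hu0 : u 0 = 0 := by simp [hu_def]
  have hv0 : v 0 = 0 := by simp [hv_def]
  have hu_nonneg : ∀ i : ℕ, 0 ≤ u i := fun i => by
    simp only [hu_def]; positivity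
  have hv_nonneg : ∀ i : ℕ, 0 ≤ v i := fun i => by
    simp only [hv_def]; positivity
  have hu_le : ∀ i : ℕ, i ≤ M → u i ≤ π/2 := by
    intro i hi
    rw [← huM]
    simp only [hu_def]
    have : (i:ℝ) ≤ M := by exact_mod_cast hi
    nlinarith
  have hv_le : ∀ i : ℕ, i ≤ N → v i ≤ π/2 := by
    intro i hi
    rw [← hvN]
    simp only [hv_def]
    have : (i:ℝ) ≤ N := by exact_mod_cast hi
    nlinarith
  -- sample points
  set sθ : ℕ → ℝ := fun j => ((j:ℝ)+1)*π/(2*M+1) with hsθ_def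
  set sφ : ℕ → ℝ := fun k => ((k:ℝ)+1)*π/(2*N+1) with hsφ_def
  have hsθ_mem : ∀ j : ℕ, j < M → sθ j ∈ Set.Icc (u j) (u (j+1)) := by
    intro j hj
    have hj' : (j:ℝ) + 1 ≤ M := by exact_mod_cast hj
    have hj0 : (0:ℝ) ≤ j := Nat.cast_nonneg j
    constructor
    · simp only [hsθ_def, hu_def, hh_def]
      rw [show (j:ℝ) * (π / (2 * (M:ℝ))) = (j:ℝ) * π / (2 * (M:ℝ)) from by ring,
        div_le_div_iff₀ (by positivity) (by positivity)]
      nlinarith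
    · simp only [hsθ_def, hu_def, hh_def]
      push_cast
      rw [show ((j:ℝ) + 1) * (π / (2 * (M:ℝ))) = ((j:ℝ)+1) * π / (2 * (M:ℝ)) from by ring,
        div_le_div_iff₀ (by positivity) (by positivity)]
      nlinarith
  have hsφ_mem : ∀ k : ℕ, k < N → sφ k ∈ Set.Icc (v k) (v (k+1)) := by
    intro k hk
    have hk' : (k:ℝ) + 1 ≤ N := by exact_mod_cast hk
    have hk0 : (0:ℝ) ≤ k := Nat.cast_nonneg k
    constructor
    · simp only [hsφ_def, hv_def, hh'_def]
      rw [show (k:ℝ) * (π / (2 * (N:ℝ))) = (k:ℝ) * π / (2 * (N:ℝ)) from by ring,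
        div_le_div_iff₀ (by positivity) (by positivity)]
      nlinarith
    · simp only [hsφ_def, hv_def, hh'_def]
      push_cast
      rw [show ((k:ℝ) + 1) * (π / (2 * (N:ℝ))) = ((k:ℝ)+1) * π / (2 * (N:ℝ)) from by ring,
        div_le_div_iff₀ (by positivity) (by positivity)]
      nlinarith
  have hGcont : ∀ α β : ℝ, Continuous fun θ => ∫ φ in α..β, F θ φ :=
    cont_param F hF
  have hFθcont : ∀ θ : ℝ, Continuous fun φ => F θ φ := fun θ =>
    hF.comp (continuous_const.prodMk continuous_id)
  -- step 1 : decompose the integral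
  have step1 : (∫ θ in (0:ℝ)..(π/2), ∫ φ in (0:ℝ)..(π/2), F θ φ)
      = ∑ j ∈ Finset.range M, ∑ k ∈ Finset.range N,
          ∫ θ in u j..u (j+1), ∫ φ in v k..v (k+1), F θ φ := by
    have houter : (∫ θ in (0:ℝ)..(π/2), ∫ φ in (0:ℝ)..(π/2), F θ φ)
        = ∑ j ∈ Finset.range M, ∫ θ in u j..u (j+1), ∫ φ in (0:ℝ)..(π/2), F θ φ := by
      rw [intervalIntegral.sum_integral_adjacent_intervals
        (fun i _ => ((hGcont 0 (π/2)).intervalIntegrable _ _)), hu0, huM]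
    rw [houter]
    refine Finset.sum_congr rfl fun j _ => ?_
    have hinner : ∀ θ : ℝ, (∫ φ in (0:ℝ)..(π/2), F θ φ)
        = ∑ k ∈ Finset.range N, ∫ φ in v k..v (k+1), F θ φ := by
      intro θ
      rw [intervalIntegral.sum_integral_adjacent_intervals
        (fun i _ => (((hFθcont θ).intervalIntegrable _ _))), hv0, hvN]
    rw [intervalIntegral.integral_congr (g := fun θ =>
      ∑ k ∈ Finset.range N, ∫ φ in v k..v (k+1), F θ φ) (fun θ _ => hinner θ)]
    exact intervalIntegral.integral_finset_sum
      (fun k _ => ((hGcont (v k) (v (k+1))).intervalIntegrable _ _))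
  -- step 2 : per-cell estimate
  have step2 : ∀ j < M, ∀ k < N,
      |F (sθ j) (sφ k) * (h * h')
        - ∫ θ in u j..u (j+1), ∫ φ in v k..v (k+1), F θ φ| ≤ ε * (h * h') := by
    intro j hj k hk
    set c : ℝ := F (sθ j) (sφ k) with hc_def
    have e1 : ∀ θ : ℝ, (∫ φ in v k..v (k+1), (F θ φ - c))
        = (∫ φ in v k..v (k+1), F θ φ) - c * h' := by
      intro θ
      rw [intervalIntegral.integral_sub ((hFθcont θ).intervalIntegrable _ _)
        intervalIntegrable_const, intervalIntegral.integral_const, smul_eq_mul,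
        hv_step k]
      ring
    have e2 : (∫ θ in u j..u (j+1), ∫ φ in v k..v (k+1), (F θ φ - c))
        = (∫ θ in u j..u (j+1), ∫ φ in v k..v (k+1), F θ φ) - c * (h * h') := by
      rw [intervalIntegral.integral_congr (g := fun θ =>
        (∫ φ in v k..v (k+1), F θ φ) - c * h') (fun θ _ => e1 θ)]
      rw [intervalIntegral.integral_sub ((hGcont _ _).intervalIntegrable _ _)
        intervalIntegrable_const, intervalIntegral.integral_const, smul_eq_mul,
        hu_step j]
      ring
    have hbound : ‖∫ θ in u j..u (j+1), ∫ φ in v k..v (k+1), (F θ φ - c)‖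
        ≤ (ε * h') * |u (j+1) - u j| := by
      apply intervalIntegral.norm_integral_le_of_norm_le_const
      intro θ hθ
      rw [Set.uIoc_of_le (hu_mono j)] at hθ
      have hθmem : θ ∈ Set.Icc (0:ℝ) (π/2) :=
        ⟨le_trans (hu_nonneg j) hθ.1.le, le_trans hθ.2 (hu_le _ hj)⟩
      have : ‖∫ φ in v k..v (k+1), (F θ φ - c)‖ ≤ ε * |v (k+1) - v k| := by
        apply intervalIntegral.norm_integral_le_of_norm_le_const
        intro φ hφ
        rw [Set.uIoc_of_le (hv_mono k)] at hφ
        have hφmem : φ ∈ Set.Icc (0:ℝ) (π/2) :=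
          ⟨le_trans (hv_nonneg k) hφ.1.le, le_trans hφ.2 (hv_le _ hk)⟩
        have hsθm := hsθ_mem j hj
        have hsφm := hsφ_mem k hk
        have hsθmem : sθ j ∈ Set.Icc (0:ℝ) (π/2) :=
          ⟨le_trans (hu_nonneg j) hsθm.1, le_trans hsθm.2 (hu_le _ hj)⟩
        have hsφmem : sφ k ∈ Set.Icc (0:ℝ) (π/2) :=
          ⟨le_trans (hv_nonneg k) hsφm.1, le_trans hsφm.2 (hv_le _ hk)⟩
        have hd : dist ((θ, φ) : ℝ × ℝ) ((sθ j, sφ k) : ℝ × ℝ) < δ := by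
          rw [Prod.dist_eq]
          apply max_lt
          · rw [Real.dist_eq]
            have h1 := hθ.1.le; have h2 := hθ.2
            have h3 := hsθm.1; have h4 := hsθm.2
            have h5 := hu_step j
            rw [abs_lt]
            constructor <;> linarith
          · rw [Real.dist_eq]
            have h1 := hφ.1.le; have h2 := hφ.2
            have h3 := hsφm.1; have h4 := hsφm.2
            have h5 := hv_step k
            rw [abs_lt]
            constructor <;> linarith
        exact hmod (θ, φ) ⟨hθmem, hφmem⟩ (sθ j, sφ k) ⟨hsθmem, hsφmem⟩ hd
      calc ‖∫ φ in v k..v (k+1), (F θ φ - c)‖ ≤ ε * |v (k+1) - v k| := this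
        _ = ε * h' := by rw [hv_step k, abs_of_pos hh'pos]
    rw [e2] at hbound
    rw [hu_step j, abs_of_pos hhpos] at hbound
    rw [abs_sub_comm]
    calc |(∫ θ in u j..u (j+1), ∫ φ in v k..v (k+1), F θ φ) - c * (h * h')|
        ≤ ε * h' * h := hbound
      _ = ε * (h * h') := by ring
  -- step 3 : combine
  rw [step1]
  have hsum : h * h' * (∑ j ∈ Finset.range M, ∑ k ∈ Finset.range N, F (sθ j) (sφ k))
      = ∑ j ∈ Finset.range M, ∑ k ∈ Finset.range N, F (sθ j) (sφ k) * (h * h') := by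
    rw [Finset.mul_sum]
    refine Finset.sum_congr rfl fun j _ => ?_
    rw [Finset.mul_sum]
    refine Finset.sum_congr rfl fun k _ => ?_
    ring
  rw [hsum, ← Finset.sum_sub_distrib]
  calc |∑ j ∈ Finset.range M, (∑ k ∈ Finset.range N, F (sθ j) (sφ k) * (h * h')
          - ∑ k ∈ Finset.range N, ∫ θ in u j..u (j+1), ∫ φ in v k..v (k+1), F θ φ)|
      ≤ ∑ j ∈ Finset.range M, |∑ k ∈ Finset.range N, F (sθ j) (sφ k) * (h * h')
          - ∑ k ∈ Finset.range N, ∫ θ in u j..u (j+1), ∫ φ in v k..v (k+1), F θ φ| :=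
        Finset.abs_sum_le_sum_abs _ _
    _ ≤ ∑ j ∈ Finset.range M, ∑ k ∈ Finset.range N, (ε * (h * h')) := by
        refine Finset.sum_le_sum fun j hj => ?_
        rw [← Finset.sum_sub_distrib]
        calc |∑ k ∈ Finset.range N, (F (sθ j) (sφ k) * (h * h')
                - ∫ θ in u j..u (j+1), ∫ φ in v k..v (k+1), F θ φ)|
            ≤ ∑ k ∈ Finset.range N, |F (sθ j) (sφ k) * (h * h')
                - ∫ θ in u j..u (j+1), ∫ φ in v k..v (k+1), F θ φ| :=
              Finset.abs_sum_le_sum_abs _ _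
          _ ≤ ∑ k ∈ Finset.range N, (ε * (h * h')) :=
              Finset.sum_le_sum fun k hk =>
                step2 j (Finset.mem_range.1 hj) k (Finset.mem_range.1 hk)
    _ = (M : ℝ) * ((N : ℝ) * (ε * (h * h'))) := by
        simp [Finset.sum_const, Finset.card_range, nsmul_eq_mul]
    _ = ((M:ℝ) * h) * (((N:ℝ) * h')) * ε := by ring
    _ = (π/2)^2 * ε := by
        have e1 : (M:ℝ) * h = π/2 := by rw [hh_def]; field_simp
        have e2 : (N:ℝ) * h' = π/2 := by rw [hh'_def]; field_simp
        rw [e1, e2]; ring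

lemma riemann2 (F : ℝ → ℝ → ℝ) (hF : Continuous fun p : ℝ × ℝ => F p.1 p.2) :
    Filter.Tendsto (fun p : ℕ × ℕ =>
      (1 / ((p.1:ℝ) * p.2)) * ∑ j ∈ Finset.range p.1, ∑ k ∈ Finset.range p.2,
        F (((j:ℝ)+1) * π / (2*(p.1:ℝ)+1)) (((k:ℝ)+1) * π / (2*(p.2:ℝ)+1)))
    Filter.atTop
    (nhds ((4/π^2) * ∫ θ in (0:ℝ)..(π/2), ∫ φ in (0:ℝ)..(π/2), F θ φ)) := by
  have hπ := Real.pi_pos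
  rw [Metric.tendsto_nhds]
  intro ε hε
  -- uniform continuity on the square
  have hK : IsCompact (Set.Icc (0:ℝ) (π/2) ×ˢ Set.Icc (0:ℝ) (π/2)) :=
    isCompact_Icc.prod isCompact_Icc
  have hUC := hK.uniformContinuousOn_of_continuous hF.continuousOn
  rw [Metric.uniformContinuousOn_iff] at hUC
  obtain ⟨δ, hδ, hδ'⟩ := hUC (ε/2) (by positivity)
  have hmod : ∀ p ∈ Set.Icc (0:ℝ) (π/2) ×ˢ Set.Icc (0:ℝ) (π/2),
      ∀ q ∈ Set.Icc (0:ℝ) (π/2) ×ˢ Set.Icc (0:ℝ) (π/2),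
      dist p q < δ → |F p.1 p.2 - F q.1 q.2| ≤ ε/2 := by
    intro p hp q hq hpq
    have := hδ' p hp q hq hpq
    rw [Real.dist_eq] at this
    exact this.le
  -- choose threshold
  obtain ⟨K₀, hK₀⟩ := exists_nat_gt (π/δ)
  have hK₀pos : 0 < K₀ := by
    by_contra hc
    push_neg at hc
    interval_cases K₀
    simp at hK₀
    nlinarith [div_pos hπ hδ]
  have hmesh : ∀ n : ℕ, K₀ ≤ n → π/(2*(n:ℝ)) < δ := by
    intro n hn
    have hn0 : (0:ℝ) < n := by
      have : 0 < n := lt_of_lt_of_le hK₀pos hn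
      exact_mod_cast this
    have hKn : (K₀:ℝ) ≤ n := by exact_mod_cast hn
    have hπδ : π/δ < K₀ := hK₀
    rw [div_lt_iff₀ (by positivity)]
    rw [div_lt_iff₀ hδ] at hπδ
    nlinarith
  rw [eventually_atTop]
  refine ⟨(K₀, K₀), fun p hp => ?_⟩
  obtain ⟨hp1, hp2⟩ := hp
  set M := p.1
  set N := p.2
  have hM : 1 ≤ M := le_trans hK₀pos hp1
  have hN : 1 ≤ N := le_trans hK₀pos hp2
  have hM0 : (0:ℝ) < M := by exact_mod_cast hM
  have hN0 : (0:ℝ) < N := by exact_mod_cast hN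
  have hkey := key_est F hF (le_of_lt (by positivity : (0:ℝ) < ε/2)) hδ hmod hM hN
    (hmesh M hp1) (hmesh N hp2)
  rw [Real.dist_eq]
  have halg : (1 / ((M:ℝ) * N)) * (∑ j ∈ Finset.range M, ∑ k ∈ Finset.range N,
        F (((j:ℝ)+1) * π / (2*(M:ℝ)+1)) (((k:ℝ)+1) * π / (2*(N:ℝ)+1)))
      - (4/π^2) * (∫ θ in (0:ℝ)..(π/2), ∫ φ in (0:ℝ)..(π/2), F θ φ)
      = (4/π^2) * ((π/(2*M)) * (π/(2*N)) * (∑ j ∈ Finset.range M, ∑ k ∈ Finset.range N,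
          F (((j:ℝ)+1) * π / (2*(M:ℝ)+1)) (((k:ℝ)+1) * π / (2*(N:ℝ)+1)))
        - ∫ θ in (0:ℝ)..(π/2), ∫ φ in (0:ℝ)..(π/2), F θ φ) := by
    generalize (∑ j ∈ Finset.range M, ∑ k ∈ Finset.range N,
        F (((j:ℝ)+1) * π / (2*(M:ℝ)+1)) (((k:ℝ)+1) * π / (2*(N:ℝ)+1))) = S
    field_simp
    ring
  rw [halg, abs_mul, abs_of_pos (by positivity : (0:ℝ) < 4/π^2)]
  calc (4/π^2) * |(π/(2*M)) * (π/(2*N)) * _ - _| ≤ (4/π^2) * ((π/2)^2 * (ε/2)) := by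
        exact mul_le_mul_of_nonneg_left hkey (by positivity)
    _ = ε/2 := by field_simp; ring
    _ < ε := by linarith

theorem gridDicot_free_energy (x a b₁ b₂ : ℝ)
    (hx : 0 < x) (ha : 0 < a) (hb₁ : 0 < b₁) (hb₂ : 0 < b₂) :
    Filter.Tendsto
      (fun p : ℕ × ℕ =>
        (1 / (4 * (p.1 : ℝ) * (p.2 : ℝ))) *
          Real.log (∏ j ∈ Finset.Icc 1 p.1, ∏ k ∈ Finset.Icc 1 p.2,
            (x ^ 2 + 4 * a ^ 2 * Real.cos ((j : ℝ) * Real.pi / (2 * (p.1 : ℝ) + 1)) ^ 2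
              + 4 * (b₁ ^ 2 + b₂ ^ 2) *
                  Real.cos ((k : ℝ) * Real.pi / (2 * (p.2 : ℝ) + 1)) ^ 2) ^ 2))
      Filter.atTop
      (nhds ((2 / Real.pi ^ 2) *
        ∫ θ in (0:ℝ)..(Real.pi / 2), ∫ φ in (0:ℝ)..(Real.pi / 2),
          Real.log (x ^ 2 + 4 * a ^ 2 * Real.cos θ ^ 2
            + 4 * (b₁ ^ 2 + b₂ ^ 2) * Real.cos φ ^ 2))) := by
  have hπ := Real.pi_pos
  have hpos : ∀ θ φ : ℝ,
      0 < x ^ 2 + 4 * a ^ 2 * Real.cos θ ^ 2 + 4 * (b₁ ^ 2 + b₂ ^ 2) * Real.cos φ ^ 2 := by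
    intro θ φ
    have h1 : 0 < x ^ 2 := pow_pos hx 2
    have h2 : 0 ≤ 4 * a ^ 2 * Real.cos θ ^ 2 := by positivity
    have h3 : 0 ≤ 4 * (b₁ ^ 2 + b₂ ^ 2) * Real.cos φ ^ 2 := by positivity
    linarith
  have hFc : Continuous fun p : ℝ × ℝ =>
      (fun θ φ => Real.log (x ^ 2 + 4 * a ^ 2 * Real.cos θ ^ 2
        + 4 * (b₁ ^ 2 + b₂ ^ 2) * Real.cos φ ^ 2)) p.1 p.2 := by
    apply Continuous.log
    · fun_prop
    · intro p; exact (hpos p.1 p.2).ne'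
  have hT := (riemann2 (fun θ φ => Real.log (x ^ 2 + 4 * a ^ 2 * Real.cos θ ^ 2
    + 4 * (b₁ ^ 2 + b₂ ^ 2) * Real.cos φ ^ 2)) hFc).const_mul (1/2 : ℝ)
  have hval : (2 / Real.pi ^ 2) *
      (∫ θ in (0:ℝ)..(Real.pi / 2), ∫ φ in (0:ℝ)..(Real.pi / 2),
        Real.log (x ^ 2 + 4 * a ^ 2 * Real.cos θ ^ 2
          + 4 * (b₁ ^ 2 + b₂ ^ 2) * Real.cos φ ^ 2))
    = (1/2 : ℝ) * ((4 / Real.pi ^ 2) *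
      (∫ θ in (0:ℝ)..(Real.pi / 2), ∫ φ in (0:ℝ)..(Real.pi / 2),
        Real.log (x ^ 2 + 4 * a ^ 2 * Real.cos θ ^ 2
          + 4 * (b₁ ^ 2 + b₂ ^ 2) * Real.cos φ ^ 2))) := by ring
  rw [hval]
  refine hT.congr' ?_
  filter_upwards [eventually_ge_atTop ((1, 1) : ℕ × ℕ)] with p hp
  obtain ⟨hp1, hp2⟩ := hp
  have hM0 : ((p.1:ℝ)) ≠ 0 := by
    have : (1:ℝ) ≤ p.1 := by exact_mod_cast hp1
    linarith
  have hN0 : ((p.2:ℝ)) ≠ 0 := by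
    have : (1:ℝ) ≤ p.2 := by exact_mod_cast hp2
    linarith
  have hlog : Real.log (∏ j ∈ Finset.Icc 1 p.1, ∏ k ∈ Finset.Icc 1 p.2,
      (x ^ 2 + 4 * a ^ 2 * Real.cos ((j : ℝ) * Real.pi / (2 * (p.1 : ℝ) + 1)) ^ 2
        + 4 * (b₁ ^ 2 + b₂ ^ 2) *
            Real.cos ((k : ℝ) * Real.pi / (2 * (p.2 : ℝ) + 1)) ^ 2) ^ 2)
      = ∑ j ∈ Finset.Icc 1 p.1, ∑ k ∈ Finset.Icc 1 p.2,
          2 * Real.log (x ^ 2 + 4 * a ^ 2 * Real.cos ((j : ℝ) * Real.pi / (2 * (p.1 : ℝ) + 1)) ^ 2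
            + 4 * (b₁ ^ 2 + b₂ ^ 2) *
                Real.cos ((k : ℝ) * Real.pi / (2 * (p.2 : ℝ) + 1)) ^ 2) := by
    rw [Real.log_prod (fun j _ => Finset.prod_ne_zero_iff.2
      (fun k _ => pow_ne_zero 2 (hpos _ _).ne'))]
    refine Finset.sum_congr rfl fun j _ => ?_
    rw [Real.log_prod (fun k _ => pow_ne_zero 2 (hpos _ _).ne')]
    refine Finset.sum_congr rfl fun k _ => ?_
    rw [Real.log_pow]
    norm_num
  rw [hlog]
  have hsum : ∑ j ∈ Finset.Icc 1 p.1, ∑ k ∈ Finset.Icc 1 p.2,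
      2 * Real.log (x ^ 2 + 4 * a ^ 2 * Real.cos ((j : ℝ) * Real.pi / (2 * (p.1 : ℝ) + 1)) ^ 2
        + 4 * (b₁ ^ 2 + b₂ ^ 2) *
            Real.cos ((k : ℝ) * Real.pi / (2 * (p.2 : ℝ) + 1)) ^ 2)
      = 2 * ∑ j ∈ Finset.range p.1, ∑ k ∈ Finset.range p.2,
          (fun θ φ => Real.log (x ^ 2 + 4 * a ^ 2 * Real.cos θ ^ 2
            + 4 * (b₁ ^ 2 + b₂ ^ 2) * Real.cos φ ^ 2))
            (((j:ℝ)+1) * Real.pi / (2*(p.1:ℝ)+1)) (((k:ℝ)+1) * Real.pi / (2*(p.2:ℝ)+1)) := by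
    rw [Finset.mul_sum, ← Finset.Ico_add_one_right_eq_Icc, Finset.sum_Ico_eq_sum_range]
    simp only [Nat.add_sub_cancel]
    refine Finset.sum_congr rfl fun j _ => ?_
    rw [Finset.mul_sum, ← Finset.Ico_add_one_right_eq_Icc, Finset.sum_Ico_eq_sum_range]
    simp only [Nat.succ_sub_one, Nat.add_sub_cancel]
    refine Finset.sum_congr rfl fun k _ => ?_
    congr 1
    congr 1
    push_cast
    ring
  rw [hsum]
  beta_reduce
  generalize (∑ j ∈ Finset.range p.1, ∑ k ∈ Finset.range p.2, Real.log (x ^ 2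
    + 4 * a ^ 2 * Real.cos (((j:ℝ)+1) * Real.pi / (2*(p.1:ℝ)+1)) ^ 2 + 4 * (b₁ ^ 2 + b₂ ^ 2)
    * Real.cos (((k:ℝ)+1) * Real.pi / (2*(p.2:ℝ)+1)) ^ 2)) = S
  field_simp
  ring
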